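/- If R : H → ℝ is η-strongly convex, f* minimizes R over H, and f₁,…,f_m ∈ H, then R((1/m)·Σᵢ fᵢ) - R(f*) ≤ (1/m)·Σᵢ (R(fᵢ) - R(f*)) - (η/(4m²))·Σ_{i≠j} ‖fᵢ - fⱼ‖². -/

import Mathlib

open Finset

theorem stmt_1 {H : Type*} [NormedAddCommGroup H] [InnerProductSpace ℝ H]
    (η : ℝ) (hη : 0 < η) (R : H → ℝ)
    (hsc : ∀ f f' : H, ∀ t : ℝ, t ∈ Set.Icc (0:ℝ) 1 →
      R (t • f + (1 - t) • f') ≤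
        t * R f + (1 - t) * R f' - η / 2 * t * (1 - t) * ‖f - f'‖ ^ 2)
    (m : ℕ) (hm : 1 ≤ m) (f : Fin m → H) (fstar : H) :
    R ((1 / (m : ℝ)) • ∑ i, f i) - R fstar ≤
      (1 / (m : ℝ)) * ∑ i, (R (f i) - R fstar) -
        η / (4 * (m : ℝ) ^ 2) *
          ∑ i, ∑ j, if i ≠ j then ‖f i - f j‖ ^ 2 else 0 := by
  have hm0 : (0:ℝ) < m := by exact_mod_cast hm
  set g : H → ℝ := fun x => R x - η / 2 * ‖x‖ ^ 2 with hg
  -- g is convex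
  have hgconv : ConvexOn ℝ Set.univ g := by
    refine ⟨convex_univ, ?_⟩
    intro x _ y _ a b ha hb hab
    have hb' : b = 1 - a := by linarith
    subst hb'
    have h1 := hsc x y a ⟨ha, by linarith⟩
    have e1 : ‖a • x + (1 - a) • y‖ ^ 2
        = a^2 * ‖x‖^2 + 2*(a*(1-a)) * inner ℝ x y + (1-a)^2 * ‖y‖^2 := by
      rw [← real_inner_self_eq_norm_sq, ← real_inner_self_eq_norm_sq,
        ← real_inner_self_eq_norm_sq]
      simp only [inner_add_add_self, real_inner_smul_left, real_inner_smul_right]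
      rw [real_inner_comm y x]
      ring
    have e2 : ‖x - y‖ ^ 2 = ‖x‖^2 - 2 * inner ℝ x y + ‖y‖^2 := by
      rw [← real_inner_self_eq_norm_sq, ← real_inner_self_eq_norm_sq,
        ← real_inner_self_eq_norm_sq]
      simp only [inner_sub_sub_self]
      rw [real_inner_comm y x]
      ring
    simp only [hg, smul_eq_mul]
    rw [e1]
    rw [e2] at h1
    nlinarith [h1]
  -- Jensen
  have hjen : g ((1 / (m:ℝ)) • ∑ i, f i) ≤ ∑ i, (1/(m:ℝ)) * g (f i) := by
    have := hgconv.map_sum_le (t := univ) (w := fun _ : Fin m => 1/(m:ℝ))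
      (p := f) (fun i _ => by positivity)
      (by simp [Finset.card_univ]; field_simp) (fun i _ => Set.mem_univ _)
    simpa [Finset.smul_sum] using this
  -- variance identity
  have hS : ∑ i, ∑ j, (if i ≠ j then ‖f i - f j‖ ^ 2 else 0)
      = 2 * (m:ℝ) * ∑ i, ‖f i‖^2 - 2 * ‖∑ i, f i‖^2 := by
    have h1 : ∀ i j : Fin m, (if i ≠ j then ‖f i - f j‖ ^ 2 else 0)
        = ‖f i‖^2 + ‖f j‖^2 - 2 * inner ℝ (f i) (f j) := by
      intro i j
      by_cases h : i = j
      · subst h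
        simp [real_inner_self_eq_norm_sq]
        ring
      · simp only [h, ne_eq, not_false_eq_true, if_true]
        rw [← real_inner_self_eq_norm_sq, ← real_inner_self_eq_norm_sq,
          ← real_inner_self_eq_norm_sq]
        simp only [inner_sub_sub_self]
        rw [real_inner_comm (f j) (f i)]
        ring
    simp only [h1]
    rw [← real_inner_self_eq_norm_sq, sum_inner]
    simp only [inner_sum]
    simp only [Finset.sum_sub_distrib, Finset.sum_add_distrib, Finset.sum_const,
      Finset.card_univ, Fintype.card_fin, nsmul_eq_mul, ← Finset.mul_sum]
    ring
  -- norm of mean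
  have hmean : ‖(1 / (m:ℝ)) • ∑ i, f i‖^2 = (1/(m:ℝ))^2 * ‖∑ i, f i‖^2 := by
    rw [norm_smul]
    simp [abs_of_pos (by positivity : (0:ℝ) < 1/(m:ℝ))]
    ring
  have key : R ((1 / (m:ℝ)) • ∑ i, f i)
      ≤ (1/(m:ℝ)) * ∑ i, R (f i) -
        η / (4 * (m:ℝ)^2) * ∑ i, ∑ j, (if i ≠ j then ‖f i - f j‖ ^ 2 else 0) := by
    have hR : R ((1 / (m:ℝ)) • ∑ i, f i)
        = g ((1 / (m:ℝ)) • ∑ i, f i) + η/2 * ‖(1 / (m:ℝ)) • ∑ i, f i‖^2 := by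
      simp [hg]
    have hsum : ∑ i, (1/(m:ℝ)) * g (f i)
        = (1/(m:ℝ)) * ∑ i, R (f i) - η/2 * ((1/(m:ℝ)) * ∑ i, ‖f i‖^2) := by
      simp only [hg, ← Finset.mul_sum, Finset.sum_sub_distrib]
      ring_nf
    rw [hR, hS, hmean]
    have hm2 : (m:ℝ) ≠ 0 := ne_of_gt hm0
    have e : η / (4 * (m:ℝ)^2) * (2 * (m:ℝ) * ∑ i, ‖f i‖^2 - 2 * ‖∑ i, f i‖^2)
        = η/2 * ((1/(m:ℝ)) * ∑ i, ‖f i‖^2) - η/2 * ((1/(m:ℝ))^2 * ‖∑ i, f i‖^2) := by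
      field_simp
      ring
    rw [e]
    have := hjen
    rw [hsum] at this
    linarith
  have hsum2 : (1/(m:ℝ)) * ∑ i, (R (f i) - R fstar)
      = (1/(m:ℝ)) * ∑ i, R (f i) - R fstar := by
    rw [Finset.sum_sub_distrib]
    simp [Finset.card_univ]
    field_simp
  rw [hsum2]
  linarith [key]
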